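/- With the setup below, the center of the gauge-invariant subregion algebra is spanned by the superselection-sector projections: an operator T on H belongs to both Ã_r := {Π (O ⊗ 1) Π : O ∈ End(H_r)} and Ã_r̄ := {Π (1 ⊗ O') Π : O' ∈ End(H_r̄)} if and only if T is a complex linear combination of the operators P̃^α := (1/d_α) Σ_{1≤i≤n_α} Σ_{1≤j≤n̄_α} Σ_{1≤k,ℓ≤d_α} |α i k⟩_r⟨α i ℓ| ⊗ |ᾱ j k⟩_r̄⟨ᾱ j ℓ| over α ∈ I. Equivalently, Ã_r ∩ Ã_r̄ = span_ℂ{P̃^α : α ∈ I}. -/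

import Mathlib

open Matrix
open scoped Kronecker ComplexOrder

abbrev BIdx (I : Type) (n d : I → ℕ) : Type := Σ α : I, Fin (n α) × Fin (d α)

noncomputable def Arep {G I : Type} [Group G] [Fintype I] [DecidableEq I] {d : I → ℕ}
    (n : I → ℕ) (D : ∀ α : I, G →* Matrix.unitaryGroup (Fin (d α)) ℂ) (g : G) :
    Matrix (BIdx I n d) (BIdx I n d) ℂ :=
  Matrix.blockDiagonal' fun α =>
    (1 : Matrix (Fin (n α)) (Fin (n α)) ℂ) ⊗ₖ ((D α g : Matrix (Fin (d α)) (Fin (d α)) ℂ))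

noncomputable def Abar {G I : Type} [Group G] [Fintype I] [DecidableEq I] {d : I → ℕ}
    (nbar : I → ℕ) (D : ∀ α : I, G →* Matrix.unitaryGroup (Fin (d α)) ℂ) (g : G) :
    Matrix (BIdx I nbar d) (BIdx I nbar d) ℂ :=
  Matrix.blockDiagonal' fun α =>
    (1 : Matrix (Fin (nbar α)) (Fin (nbar α)) ℂ) ⊗ₖ
      ((D α g : Matrix (Fin (d α)) (Fin (d α)) ℂ).map (starRingEnd ℂ))

noncomputable def gaugeProj {G I : Type} [Group G] [Fintype G] [Fintype I] [DecidableEq I]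
    {d : I → ℕ} (n nbar : I → ℕ) (D : ∀ α : I, G →* Matrix.unitaryGroup (Fin (d α)) ℂ) :
    Matrix (BIdx I n d × BIdx I nbar d) (BIdx I n d × BIdx I nbar d) ℂ :=
  (Fintype.card G : ℂ)⁻¹ • ∑ g : G, (Arep n D g) ⊗ₖ (Abar nbar D g)

noncomputable def Ptilde {I : Type} [DecidableEq I] (n nbar d : I → ℕ) (α : I) :
    Matrix (BIdx I n d × BIdx I nbar d) (BIdx I n d × BIdx I nbar d) ℂ :=
  (d α : ℂ)⁻¹ • ∑ i : Fin (n α), ∑ j : Fin (nbar α), ∑ k : Fin (d α), ∑ l : Fin (d α),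
    Matrix.single (⟨α, (i, k)⟩, ⟨α, (j, k)⟩) (⟨α, (i, l)⟩, ⟨α, (j, l)⟩) 1

noncomputable def AtildeR {G I : Type} [Group G] [Fintype G] [Fintype I] [DecidableEq I]
    {d : I → ℕ} (n nbar : I → ℕ) (D : ∀ α : I, G →* Matrix.unitaryGroup (Fin (d α)) ℂ) :
    Set (Matrix (BIdx I n d × BIdx I nbar d) (BIdx I n d × BIdx I nbar d) ℂ) :=
  { T | ∃ O : Matrix (BIdx I n d) (BIdx I n d) ℂ,
      T = gaugeProj n nbar D * (O ⊗ₖ (1 : Matrix (BIdx I nbar d) (BIdx I nbar d) ℂ)) *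
        gaugeProj n nbar D }

noncomputable def AtildeRbar {G I : Type} [Group G] [Fintype G] [Fintype I] [DecidableEq I]
    {d : I → ℕ} (n nbar : I → ℕ) (D : ∀ α : I, G →* Matrix.unitaryGroup (Fin (d α)) ℂ) :
    Set (Matrix (BIdx I n d × BIdx I nbar d) (BIdx I n d × BIdx I nbar d) ℂ) :=
  { T | ∃ O : Matrix (BIdx I nbar d) (BIdx I nbar d) ℂ,
      T = gaugeProj n nbar D * ((1 : Matrix (BIdx I n d) (BIdx I n d) ℂ) ⊗ₖ O) *
        gaugeProj n nbar D }

noncomputable def tauTr {I : Type} [Fintype I] [DecidableEq I] (n nbar d : I → ℕ)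
    (T : Matrix (BIdx I n d × BIdx I nbar d) (BIdx I n d × BIdx I nbar d) ℂ) : ℂ :=
  ∑ α ∈ Finset.univ.filter (fun α => 1 ≤ nbar α),
    ((nbar α : ℂ))⁻¹ * (Ptilde n nbar d α * T).trace


set_option linter.unusedSectionVars false
open Matrix
open scoped Kronecker ComplexOrder

section Schur
variable {G I : Type} [Group G] [Fintype G] [Fintype I] [DecidableEq I]
variable {d : I → ℕ} (D : ∀ α : I, G →* Matrix.unitaryGroup (Fin (d α)) ℂ)

lemma coeD_mul (α : I) (g h : G) :
    (D α g : Matrix (Fin (d α)) (Fin (d α)) ℂ) * (D α h : Matrix (Fin (d α)) (Fin (d α)) ℂ)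
      = (D α (g * h) : Matrix (Fin (d α)) (Fin (d α)) ℂ) := by
  rw [_root_.map_mul]; rfl

lemma coeD_one (α : I) : (D α 1 : Matrix (Fin (d α)) (Fin (d α)) ℂ) = 1 := by
  rw [_root_.map_one]; rfl

lemma coeD_inv (α : I) (g : G) :
    (D α g⁻¹ : Matrix (Fin (d α)) (Fin (d α)) ℂ) = star (D α g : Matrix (Fin (d α)) (Fin (d α)) ℂ) := by
  rw [_root_.map_inv]; exact Matrix.UnitaryGroup.inv_val _

noncomputable def avgF (α β : I) (X : Matrix (Fin (d α)) (Fin (d β)) ℂ) :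
    Matrix (Fin (d α)) (Fin (d β)) ℂ :=
  (Fintype.card G : ℂ)⁻¹ • ∑ g : G,
    (D α g : Matrix (Fin (d α)) (Fin (d α)) ℂ) * X * (D β g⁻¹ : Matrix (Fin (d β)) (Fin (d β)) ℂ)

lemma avgF_intertwine (α β : I) (X : Matrix (Fin (d α)) (Fin (d β)) ℂ) (h : G) :
    (D α h : Matrix (Fin (d α)) (Fin (d α)) ℂ) * avgF D α β X
      = avgF D α β X * (D β h : Matrix (Fin (d β)) (Fin (d β)) ℂ) := by
  unfold avgF
  rw [Matrix.mul_smul, Matrix.smul_mul, Matrix.mul_sum, Matrix.sum_mul]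
  congr 1
  apply Fintype.sum_bijective (fun g => h * g) (Group.mulLeft_bijective h)
  intro g
  have h1 : (D α h : Matrix (Fin (d α)) (Fin (d α)) ℂ) * (D α g : Matrix (Fin (d α)) (Fin (d α)) ℂ)
      = (D α (h * g) : Matrix (Fin (d α)) (Fin (d α)) ℂ) := coeD_mul D α h g
  have h2 : (D β (h * g)⁻¹ : Matrix (Fin (d β)) (Fin (d β)) ℂ)
        * (D β h : Matrix (Fin (d β)) (Fin (d β)) ℂ)
      = (D β g⁻¹ : Matrix (Fin (d β)) (Fin (d β)) ℂ) := by
    rw [coeD_mul]; congr 1; group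
  calc (D α h : Matrix (Fin (d α)) (Fin (d α)) ℂ)
        * ((D α g : Matrix (Fin (d α)) (Fin (d α)) ℂ) * X * (D β g⁻¹ : Matrix (Fin (d β)) (Fin (d β)) ℂ))
      = ((D α h : Matrix (Fin (d α)) (Fin (d α)) ℂ) * (D α g : Matrix (Fin (d α)) (Fin (d α)) ℂ)) * X
          * (D β g⁻¹ : Matrix (Fin (d β)) (Fin (d β)) ℂ) := by simp only [Matrix.mul_assoc]
    _ = (D α (h*g) : Matrix (Fin (d α)) (Fin (d α)) ℂ) * X
          * ((D β (h*g)⁻¹ : Matrix (Fin (d β)) (Fin (d β)) ℂ) * (D β h : Matrix (Fin (d β)) (Fin (d β)) ℂ)) := by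
        rw [h1, h2]
    _ = (D α (h*g) : Matrix (Fin (d α)) (Fin (d α)) ℂ) * X
          * (D β (h*g)⁻¹ : Matrix (Fin (d β)) (Fin (d β)) ℂ) * (D β h : Matrix (Fin (d β)) (Fin (d β)) ℂ) := by
        simp only [Matrix.mul_assoc]

lemma avgF_ne (hnoniso : ∀ α β, α ≠ β → ∀ F : Matrix (Fin (d α)) (Fin (d β)) ℂ,
      (∀ g : G, (D α g : Matrix (Fin (d α)) (Fin (d α)) ℂ) * F
          = F * (D β g : Matrix (Fin (d β)) (Fin (d β)) ℂ)) → F = 0)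
    {α β : I} (hab : α ≠ β) (X : Matrix (Fin (d α)) (Fin (d β)) ℂ) :
    avgF D α β X = 0 :=
  hnoniso α β hab _ (fun g => avgF_intertwine D α β X g)

lemma avgF_eq (hd : ∀ α, 1 ≤ d α)
    (hirr : ∀ α (W : Submodule ℂ (Fin (d α) → ℂ)),
      (∀ g : G, ∀ x ∈ W, (D α g : Matrix (Fin (d α)) (Fin (d α)) ℂ) *ᵥ x ∈ W) →
      W = ⊥ ∨ W = ⊤)
    (α : I) (X : Matrix (Fin (d α)) (Fin (d α)) ℂ) :
    avgF D α α X = ((d α : ℂ)⁻¹ * X.trace) • 1 := by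
  set F := avgF D α α X with hF
  have hcomm : ∀ h : G, (D α h : Matrix (Fin (d α)) (Fin (d α)) ℂ) * F
      = F * (D α h : Matrix (Fin (d α)) (Fin (d α)) ℂ) := fun h => avgF_intertwine D α α X h
  haveI : NeZero (d α) := ⟨by have := hd α; omega⟩
  haveI : Nonempty (Fin (d α)) := ⟨⟨0, hd α⟩⟩
  obtain ⟨μ, hμ⟩ := Module.End.exists_eigenvalue (Matrix.mulVecLin F)
  have hinv : ∀ g : G, ∀ x ∈ Module.End.eigenspace (Matrix.mulVecLin F) μ,
      (D α g : Matrix (Fin (d α)) (Fin (d α)) ℂ) *ᵥ x ∈ Module.End.eigenspace (Matrix.mulVecLin F) μ := by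
    intro g x hx
    rw [Module.End.mem_eigenspace_iff] at hx ⊢
    simp only [Matrix.mulVecLin_apply] at hx ⊢
    rw [Matrix.mulVec_mulVec, ← hcomm g, ← Matrix.mulVec_mulVec, hx, Matrix.mulVec_smul]
  have hW : Module.End.eigenspace (Matrix.mulVecLin F) μ = ⊤ := by
    rcases hirr α (Module.End.eigenspace (Matrix.mulVecLin F) μ) hinv with hbot | htop
    · exact absurd hbot hμ
    · exact htop
  have hFsmul : F = μ • (1 : Matrix (Fin (d α)) (Fin (d α)) ℂ) := by
    ext i j
    have hx : Matrix.mulVecLin F (Pi.single j 1) = μ • (Pi.single j 1 : Fin (d α) → ℂ) := by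
      rw [← Module.End.mem_eigenspace_iff, hW]; trivial
    have h2 := congrFun hx i
    simp only [Matrix.mulVecLin_apply, Matrix.mulVec_single, Pi.smul_apply, Pi.single_apply,
      smul_eq_mul, mul_one] at h2
    rw [Matrix.smul_apply, Matrix.one_apply, smul_eq_mul]; simpa using h2
  have htr : F.trace = X.trace := by
    rw [hF]
    unfold avgF
    rw [Matrix.trace_smul, Matrix.trace_sum]
    have heach : ∀ g : G, ((D α g : Matrix (Fin (d α)) (Fin (d α)) ℂ) * X
        * (D α g⁻¹ : Matrix (Fin (d α)) (Fin (d α)) ℂ)).trace = X.trace := by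
      intro g
      rw [Matrix.trace_mul_cycle, coeD_mul]
      simp [coeD_one]
    simp only [heach, Finset.sum_const, Finset.card_univ, smul_eq_mul, nsmul_eq_mul]
    haveI : Nonempty G := One.instNonempty
    have hG : (Fintype.card G : ℂ) ≠ 0 := Nat.cast_ne_zero.mpr Fintype.card_ne_zero
    field_simp
  have hdne : (d α : ℂ) ≠ 0 := Nat.cast_ne_zero.mpr (by have := hd α; omega)
  have hμval : μ * (d α : ℂ) = X.trace := by
    rw [hFsmul] at htr
    rw [Matrix.trace_smul, Matrix.trace_one, smul_eq_mul, Fintype.card_fin] at htr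
    exact htr
  rw [hFsmul]
  congr 1
  field_simp
  linear_combination hμval

lemma sandwich {m' n' p' q' : Type} [Fintype n'] [Fintype p'] [DecidableEq n'] [DecidableEq p']
    (A : Matrix m' n' ℂ) (B : Matrix p' q' ℂ) (i : n') (j : p') (k : m') (l : q') :
    (A * Matrix.single i j (1 : ℂ) * B) k l = A k i * B j l := by
  rw [Matrix.mul_apply]
  have hcol : ∀ b : p', (A * Matrix.single i j (1 : ℂ)) k b
      = if b = j then A k i else 0 := by
    intro b
    simp only [Matrix.mul_apply, Matrix.single, Matrix.of_apply, mul_ite, mul_one,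
      mul_zero, ite_and]
    rw [Finset.sum_ite_eq Finset.univ i]
    simp [eq_comm]
  simp only [hcol, ite_mul, zero_mul]
  rw [Finset.sum_ite_eq' Finset.univ j (fun b => A k i * B b l)]
  simp

lemma trace_sbm {n' : Type} [Fintype n'] [DecidableEq n'] (i j : n') :
    (Matrix.single i j (1 : ℂ)).trace = if i = j then 1 else 0 := by
  unfold Matrix.trace Matrix.diag Matrix.single
  simp only [Matrix.of_apply]
  rw [Finset.sum_congr rfl (fun a _ => ?_), Finset.sum_ite_eq Finset.univ i (fun a => if j = a then (1:ℂ) else 0)]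
  · simp [eq_comm]
  · rw [ite_and]

lemma avgF_entry (α β : I) (k : Fin (d α)) (k' : Fin (d α)) (l : Fin (d β)) (l' : Fin (d β)) :
    avgF D α β (Matrix.single k' l' (1 : ℂ)) k l
      = (Fintype.card G : ℂ)⁻¹ * ∑ g : G, (D α g : Matrix (Fin (d α)) (Fin (d α)) ℂ) k k'
          * star ((D β g : Matrix (Fin (d β)) (Fin (d β)) ℂ) l l') := by
  unfold avgF
  rw [Matrix.smul_apply, Matrix.sum_apply, smul_eq_mul]
  congr 1
  apply Finset.sum_congr rfl
  intro g _
  rw [coeD_inv, sandwich, Matrix.star_apply]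

lemma schur_ne (hnoniso : ∀ α β, α ≠ β → ∀ F : Matrix (Fin (d α)) (Fin (d β)) ℂ,
      (∀ g : G, (D α g : Matrix (Fin (d α)) (Fin (d α)) ℂ) * F
          = F * (D β g : Matrix (Fin (d β)) (Fin (d β)) ℂ)) → F = 0)
    {α β : I} (hab : α ≠ β) (k : Fin (d α)) (k' : Fin (d α)) (l : Fin (d β)) (l' : Fin (d β)) :
    (Fintype.card G : ℂ)⁻¹ * ∑ g : G, (D α g : Matrix (Fin (d α)) (Fin (d α)) ℂ) k k'
          * star ((D β g : Matrix (Fin (d β)) (Fin (d β)) ℂ) l l') = 0 := by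
  rw [← avgF_entry, avgF_ne D hnoniso hab]
  rfl

lemma schur_eq (hd : ∀ α, 1 ≤ d α)
    (hirr : ∀ α (W : Submodule ℂ (Fin (d α) → ℂ)),
      (∀ g : G, ∀ x ∈ W, (D α g : Matrix (Fin (d α)) (Fin (d α)) ℂ) *ᵥ x ∈ W) →
      W = ⊥ ∨ W = ⊤)
    (α : I) (k k' l l' : Fin (d α)) :
    (Fintype.card G : ℂ)⁻¹ * ∑ g : G, (D α g : Matrix (Fin (d α)) (Fin (d α)) ℂ) k k'
          * star ((D α g : Matrix (Fin (d α)) (Fin (d α)) ℂ) l l')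
      = if k = l then (if k' = l' then (d α : ℂ)⁻¹ else 0) else 0 := by
  rw [← avgF_entry, avgF_eq D hd hirr α]
  rw [Matrix.smul_apply, Matrix.one_apply, trace_sbm, smul_eq_mul]
  split_ifs with h1 h2 <;> simp_all

end Schur


section Gm
variable {I : Type} [Fintype I] [DecidableEq I]

/-- The common index embedding: sector-diagonal basis labels. -/
def eE (n nbar d : I → ℕ) (α : I) (x : Fin (n α) × Fin (nbar α) × Fin (d α)) :
    BIdx I n d × BIdx I nbar d :=
  (⟨α, (x.1, x.2.2)⟩, ⟨α, (x.2.1, x.2.2)⟩)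

/-- Block scalar matrices supported on the sector diagonal. -/
noncomputable def Gm (n nbar d : I → ℕ)
    (c : ∀ α : I, Fin (n α) → Fin (n α) → Fin (nbar α) → Fin (nbar α) → ℂ) :
    Matrix (BIdx I n d × BIdx I nbar d) (BIdx I n d × BIdx I nbar d) ℂ :=
  fun p q => ∑ β : I, ∑ x : Fin (n β) × Fin (nbar β) × Fin (d β),
    ∑ y : Fin (n β) × Fin (nbar β) × Fin (d β),
      if p = eE n nbar d β x ∧ q = eE n nbar d β y then c β x.1 y.1 x.2.1 y.2.1 else 0

variable {n nbar d : I → ℕ}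

lemma eE_sector_fst (α : I) (x) : (eE n nbar d α x).1.1 = α := rfl
lemma eE_sector_snd (α : I) (x) : (eE n nbar d α x).2.1 = α := rfl

lemma eE_inj (α : I) {x y : Fin (n α) × Fin (nbar α) × Fin (d α)}
    (h : eE n nbar d α x = eE n nbar d α y) : x = y := by
  obtain ⟨x1, x2, x3⟩ := x
  obtain ⟨y1, y2, y3⟩ := y
  simp only [eE, Prod.mk.injEq, Sigma.ext_iff, heq_eq_eq, true_and] at h
  obtain ⟨⟨h1, h3⟩, h2, h3'⟩ := h
  simp_all

lemma eE_eq_iff (α : I) (x y : Fin (n α) × Fin (nbar α) × Fin (d α)) :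
    eE n nbar d α x = eE n nbar d α y ↔ x = y :=
  ⟨eE_inj α, fun h => by rw [h]⟩

lemma Gm_apply_e_same (c) (α : I) (x y : Fin (n α) × Fin (nbar α) × Fin (d α)) :
    Gm n nbar d c (eE n nbar d α x) (eE n nbar d α y) = c α x.1 y.1 x.2.1 y.2.1 := by
  unfold Gm
  rw [Fintype.sum_eq_single α]
  · simp only [eE_eq_iff, ite_and, Finset.sum_ite_irrel, Finset.sum_const_zero,
      Finset.sum_ite_eq, Finset.mem_univ, if_true]
  · intro β hβ
    apply Finset.sum_eq_zero; intro x' _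
    apply Finset.sum_eq_zero; intro y' _
    rw [if_neg]
    rintro ⟨h1, -⟩
    have : α = β := congrArg (fun r => r.1.1) h1
    exact hβ this.symm

lemma Gm_apply_e_ne (c) {α β : I} (hab : α ≠ β) (x) (y) :
    Gm n nbar d c (eE n nbar d α x) (eE n nbar d β y) = 0 := by
  unfold Gm
  apply Finset.sum_eq_zero; intro γ _
  apply Finset.sum_eq_zero; intro x' _
  apply Finset.sum_eq_zero; intro y' _
  rw [if_neg]
  rintro ⟨h1, h2⟩
  have e1 : α = γ := congrArg (fun r => r.1.1) h1
  have e2 : β = γ := congrArg (fun r => r.2.1) h2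
  exact hab (e1.trans e2.symm)

lemma Gm_offrange_left (c) {p} (hp : ∀ γ z, p ≠ eE n nbar d γ z) (q) :
    Gm n nbar d c p q = 0 := by
  unfold Gm
  apply Finset.sum_eq_zero; intro γ _
  apply Finset.sum_eq_zero; intro x' _
  apply Finset.sum_eq_zero; intro y' _
  exact if_neg (fun h => hp γ x' h.1)

lemma Gm_offrange_right (c) {q} (hq : ∀ γ z, q ≠ eE n nbar d γ z) (p) :
    Gm n nbar d c p q = 0 := by
  unfold Gm
  apply Finset.sum_eq_zero; intro γ _
  apply Finset.sum_eq_zero; intro x' _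
  apply Finset.sum_eq_zero; intro y' _
  exact if_neg (fun h => hq γ y' h.2)

end Gm
section GmMul
variable {I : Type} [Fintype I] [DecidableEq I] {n nbar d : I → ℕ}

/-- Collapse a sum over the full index set to a sum over the sector-diagonal support. -/
lemma sum_eE_support (F : BIdx I n d × BIdx I nbar d → ℂ)
    (β : I)
    (h0 : ∀ q', (∀ γ z, q' ≠ eE n nbar d γ z) → F q' = 0)
    (h1 : ∀ γ, γ ≠ β → ∀ z, F (eE n nbar d γ z) = 0) :
    (∑ q' : BIdx I n d × BIdx I nbar d, F q')
      = ∑ x : Fin (n β) × Fin (nbar β) × Fin (d β), F (eE n nbar d β x) := by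
  symm
  have hinj : Set.InjOn (eE n nbar d β) ↑(Finset.univ : Finset (Fin (n β) × Fin (nbar β) × Fin (d β))) :=
    fun x _ y _ h => eE_inj β h
  rw [← Finset.sum_image (fun x hx y hy h => hinj hx hy h)]
  apply Finset.sum_subset (Finset.subset_univ _)
  intro q' _ hq'
  rcases Classical.em (∃ γ z, q' = eE n nbar d γ z) with ⟨γ, z, rfl⟩ | hno
  · rcases eq_or_ne γ β with rfl | hγ
    · exact absurd (Finset.mem_image.mpr ⟨z, Finset.mem_univ z, rfl⟩) hq'
    · exact h1 γ hγ z
  · push_neg at hno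
    exact h0 q' hno

lemma mul_Gm_apply (M : Matrix (BIdx I n d × BIdx I nbar d) (BIdx I n d × BIdx I nbar d) ℂ)
    (c : ∀ α : I, Fin (n α) → Fin (n α) → Fin (nbar α) → Fin (nbar α) → ℂ)
    (r : BIdx I n d × BIdx I nbar d) (β : I) (y : Fin (n β) × Fin (nbar β) × Fin (d β)) :
    (M * Gm n nbar d c) r (eE n nbar d β y)
      = ∑ x : Fin (n β) × Fin (nbar β) × Fin (d β),
          M r (eE n nbar d β x) * c β x.1 y.1 x.2.1 y.2.1 := by
  rw [Matrix.mul_apply]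
  rw [sum_eE_support (fun q' => M r q' * Gm n nbar d c q' (eE n nbar d β y)) β]
  · apply Finset.sum_congr rfl
    intro x _
    rw [Gm_apply_e_same]
  · intro q' hq'
    rw [Gm_offrange_left c hq', mul_zero]
  · intro γ hγ z
    rw [Gm_apply_e_ne c hγ, mul_zero]

lemma Gm_mul_apply (M : Matrix (BIdx I n d × BIdx I nbar d) (BIdx I n d × BIdx I nbar d) ℂ)
    (c : ∀ α : I, Fin (n α) → Fin (n α) → Fin (nbar α) → Fin (nbar α) → ℂ)
    (α : I) (x : Fin (n α) × Fin (nbar α) × Fin (d α)) (s : BIdx I n d × BIdx I nbar d) :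
    (Gm n nbar d c * M) (eE n nbar d α x) s
      = ∑ y : Fin (n α) × Fin (nbar α) × Fin (d α),
          c α x.1 y.1 x.2.1 y.2.1 * M (eE n nbar d α y) s := by
  rw [Matrix.mul_apply]
  rw [sum_eE_support (fun q' => Gm n nbar d c (eE n nbar d α x) q' * M q' s) α]
  · apply Finset.sum_congr rfl
    intro y _
    rw [Gm_apply_e_same]
  · intro q' hq'
    rw [Gm_offrange_right c hq', zero_mul]
  · intro γ hγ z
    rw [Gm_apply_e_ne c hγ.symm, zero_mul]

end GmMul
section Key0
variable {G I : Type} [Group G] [Fintype G] [Fintype I] [DecidableEq I]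
variable {d : I → ℕ} {n nbar : I → ℕ}

lemma not_range_left {α β : I} (hβα : β ≠ α) (i : Fin (n α)) (k : Fin (d α))
    (j : Fin (nbar β)) (l : Fin (d β)) :
    ∀ (γ : I) (z : Fin (n γ) × Fin (nbar γ) × Fin (d γ)),
      ((⟨α, (i, k)⟩ : BIdx I n d), (⟨β, (j, l)⟩ : BIdx I nbar d)) ≠ eE n nbar d γ z := by
  intro γ z h
  have h1 : α = γ := congrArg (fun r => r.1.1) h
  have h2 : β = γ := congrArg (fun r => r.2.1) h
  exact hβα (h2.trans h1.symm)

lemma not_range_k {α : I} {k l : Fin (d α)} (hlk : l ≠ k) (i : Fin (n α)) (j : Fin (nbar α)) :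
    ∀ (γ : I) (z : Fin (n γ) × Fin (nbar γ) × Fin (d γ)),
      ((⟨α, (i, k)⟩ : BIdx I n d), (⟨α, (j, l)⟩ : BIdx I nbar d)) ≠ eE n nbar d γ z := by
  intro γ z h
  have h1 := congrArg Prod.fst h
  have h2 := congrArg Prod.snd h
  simp only [eE] at h1 h2
  injection h1 with hγ hik
  subst hγ
  injection h2 with hγ2 hjl
  exact hlk ((Prod.ext_iff.mp hjl).2.trans (Prod.ext_iff.mp (eq_of_heq hik)).2.symm)

lemma gaugeProj_eq (hd : ∀ α, 1 ≤ d α)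
    (D : ∀ α : I, G →* Matrix.unitaryGroup (Fin (d α)) ℂ)
    (hirr : ∀ α (W : Submodule ℂ (Fin (d α) → ℂ)),
      (∀ g : G, ∀ x ∈ W, (D α g : Matrix (Fin (d α)) (Fin (d α)) ℂ) *ᵥ x ∈ W) →
      W = ⊥ ∨ W = ⊤)
    (hnoniso : ∀ α β, α ≠ β → ∀ F : Matrix (Fin (d α)) (Fin (d β)) ℂ,
      (∀ g : G, (D α g : Matrix (Fin (d α)) (Fin (d α)) ℂ) * F
          = F * (D β g : Matrix (Fin (d β)) (Fin (d β)) ℂ)) → F = 0) :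
    gaugeProj n nbar D = Gm n nbar d
      (fun α i i' j j' => if i = i' then if j = j' then (d α : ℂ)⁻¹ else 0 else 0) := by
  ext p q
  obtain ⟨⟨α, i, k⟩, ⟨β, j, l⟩⟩ := p
  obtain ⟨⟨α', i', k'⟩, ⟨β', j', l'⟩⟩ := q
  rw [gaugeProj, Matrix.smul_apply, Matrix.sum_apply]
  simp only [Matrix.kroneckerMap_apply]
  by_cases hαα' : α = α'
  case neg =>
    have hA : ∀ g : G, Arep n D g ⟨α, (i, k)⟩ ⟨α', (i', k')⟩ = 0 := fun g =>
      Matrix.blockDiagonal'_apply_ne _ _ _ hαα'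
    simp only [hA, zero_mul, Finset.sum_const_zero, smul_zero]
    symm
    by_cases hβ : β = α
    · subst hβ
      by_cases hlk : l = k
      · subst hlk
        by_cases hβ' : β' = α'
        · subst hβ'
          by_cases hl'k' : l' = k'
          · subst hl'k'
            exact Gm_apply_e_ne _ hαα' (i, j, l) (i', j', l')
          · exact Gm_offrange_right _ (not_range_k hl'k' i' j') _
        · exact Gm_offrange_right _ (not_range_left hβ' i' k' j' l') _
      · exact Gm_offrange_left _ (not_range_k hlk i j) _
    · exact Gm_offrange_left _ (not_range_left hβ i k j l) _
  case pos =>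
  subst hαα'
  by_cases hββ' : β = β'
  case neg =>
    have hB : ∀ g : G, Abar nbar D g ⟨β, (j, l)⟩ ⟨β', (j', l')⟩ = 0 := fun g =>
      Matrix.blockDiagonal'_apply_ne _ _ _ hββ'
    simp only [hB, mul_zero, Finset.sum_const_zero, smul_zero]
    symm
    by_cases hβ : β = α
    · subst hβ
      by_cases hlk : l = k
      · subst hlk
        by_cases hβ' : β' = β
        · exact absurd hβ'.symm hββ'
        · exact Gm_offrange_right _ (not_range_left hβ' i' k' j' l') _
      · exact Gm_offrange_left _ (not_range_k hlk i j) _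
    · exact Gm_offrange_left _ (not_range_left hβ i k j l) _
  case pos =>
  subst hββ'
  have hA : ∀ g : G, Arep n D g ⟨α, (i, k)⟩ ⟨α, (i', k')⟩
      = (if i = i' then (1 : ℂ) else 0) * (D α g : Matrix (Fin (d α)) (Fin (d α)) ℂ) k k' := by
    intro g
    simp only [Arep, Matrix.blockDiagonal'_apply_eq, Matrix.kroneckerMap_apply, Matrix.one_apply]
  have hB : ∀ g : G, Abar nbar D g ⟨β, (j, l)⟩ ⟨β, (j', l')⟩
      = (if j = j' then (1 : ℂ) else 0) * star ((D β g : Matrix (Fin (d β)) (Fin (d β)) ℂ) l l') := by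
    intro g
    simp only [Abar, Matrix.blockDiagonal'_apply_eq, Matrix.kroneckerMap_apply, Matrix.one_apply,
      Matrix.map_apply]
    rfl
  simp only [hA, hB]
  have hterm : ∀ g : G,
      ((if i = i' then (1 : ℂ) else 0) * (D α g : Matrix (Fin (d α)) (Fin (d α)) ℂ) k k')
        * ((if j = j' then (1 : ℂ) else 0) * star ((D β g : Matrix (Fin (d β)) (Fin (d β)) ℂ) l l'))
      = ((if i = i' then (1 : ℂ) else 0) * (if j = j' then (1 : ℂ) else 0))
        * ((D α g : Matrix (Fin (d α)) (Fin (d α)) ℂ) k k'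
            * star ((D β g : Matrix (Fin (d β)) (Fin (d β)) ℂ) l l')) := fun g => by ring
  simp only [hterm]
  rw [← Finset.mul_sum, smul_eq_mul, mul_left_comm]
  by_cases hβα : β = α
  case pos =>
    subst hβα
    rw [schur_eq D hd hirr β k k' l l']
    by_cases hlk : l = k
    · subst hlk
      by_cases hl'k' : l' = k'
      · subst hl'k'
        rw [show ((⟨β, (i, l)⟩ : BIdx I n d), (⟨β, (j, l)⟩ : BIdx I nbar d))
              = eE n nbar d β (i, j, l) from rfl,
            show ((⟨β, (i', l')⟩ : BIdx I n d), (⟨β, (j', l')⟩ : BIdx I nbar d))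
              = eE n nbar d β (i', j', l') from rfl,
            Gm_apply_e_same]
        simp only [eq_self_iff_true, if_true]
        split_ifs <;> ring
      · rw [Gm_offrange_right _ (not_range_k hl'k' i' j') _]
        simp [Ne.symm hl'k']
    · rw [Gm_offrange_left _ (not_range_k hlk i j) _]
      simp [Ne.symm hlk]
  case neg =>
    rw [schur_ne D hnoniso (fun h => hβα h.symm) k k' l l']
    rw [Gm_offrange_left _ (not_range_left hβα i k j l) _]
    ring

end Key0
section PtildeGm
variable {I : Type} [Fintype I] [DecidableEq I] {n nbar d : I → ℕ}

lemma eE_sector_eq {γ γ' : I} {z z'} (h : eE n nbar d γ z = eE n nbar d γ' z') : γ = γ' :=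
  congrArg (fun r => r.1.1) h

lemma Ptilde_eq_Gm (α0 : I) :
    Ptilde n nbar d α0 = Gm n nbar d (fun β i i' j j' =>
      if β = α0 then (if i = i' then (if j = j' then (d β : ℂ)⁻¹ else 0) else 0) else 0) := by
  ext p q
  have hP : Ptilde n nbar d α0 p q = (d α0 : ℂ)⁻¹ *
      ∑ i : Fin (n α0), ∑ j : Fin (nbar α0), ∑ k : Fin (d α0), ∑ l : Fin (d α0),
        (if eE n nbar d α0 (i, j, k) = p ∧ eE n nbar d α0 (i, j, l) = q then (1:ℂ) else 0) := by
    rw [Ptilde, Matrix.smul_apply, smul_eq_mul]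
    congr 1
    rw [Matrix.sum_apply]
    apply Finset.sum_congr rfl; intro i _
    rw [Matrix.sum_apply]
    apply Finset.sum_congr rfl; intro j _
    rw [Matrix.sum_apply]
    apply Finset.sum_congr rfl; intro k _
    rw [Matrix.sum_apply]
    apply Finset.sum_congr rfl; intro l _
    rw [Matrix.single, Matrix.of_apply]
    rfl
  rw [hP]
  rcases Classical.em (∃ γ z, p = eE n nbar d γ z) with ⟨γ, z, rfl⟩ | hp
  · rcases Classical.em (∃ γ' z', q = eE n nbar d γ' z') with ⟨γ', z', rfl⟩ | hq
    · rcases eq_or_ne γ γ' with rfl | hgg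
      · rcases eq_or_ne γ α0 with rfl | hga
        · rw [Gm_apply_e_same]
          simp only [eE_eq_iff, if_pos rfl]
          have hsum : ∀ i : Fin (n γ), ∀ j : Fin (nbar γ),
              (∑ k : Fin (d γ), ∑ l : Fin (d γ),
                (if (i, j, k) = z ∧ (i, j, l) = z' then (1:ℂ) else 0))
              = if i = z.1 ∧ j = z.2.1 ∧ i = z'.1 ∧ j = z'.2.1 then 1 else 0 := by
            intro i j
            obtain ⟨z1, z2, z3⟩ := z
            obtain ⟨w1, w2, w3⟩ := z'
            simp only [Prod.mk.injEq]
            simp only [ite_and, Finset.sum_ite_irrel, Finset.sum_const_zero,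
              Finset.sum_ite_eq', Finset.mem_univ, if_true]
          simp only [hsum]
          simp only [ite_and, Finset.sum_ite_irrel, Finset.sum_const_zero,
            Finset.sum_ite_eq', Finset.mem_univ, if_true]
          by_cases h1 : z.1 = z'.1 <;> by_cases h2 : z.2.1 = z'.2.1 <;>
            simp [h1, h2, eq_comm]
        · rw [Gm_apply_e_same, if_neg hga]
          rw [Finset.sum_eq_zero, mul_zero]
          intro i _
          rw [Finset.sum_eq_zero]; intro j _
          rw [Finset.sum_eq_zero]; intro k _
          rw [Finset.sum_eq_zero]; intro l _
          exact if_neg (fun h => hga (eE_sector_eq h.1).symm)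
      · rw [Gm_apply_e_ne _ hgg]
        rw [Finset.sum_eq_zero, mul_zero]
        intro i _
        rw [Finset.sum_eq_zero]; intro j _
        rw [Finset.sum_eq_zero]; intro k _
        rw [Finset.sum_eq_zero]; intro l _
        refine if_neg (fun h => hgg ?_)
        exact (eE_sector_eq h.1).symm.trans (eE_sector_eq h.2)
    · push_neg at hq
      rw [Gm_offrange_right _ hq]
      rw [Finset.sum_eq_zero, mul_zero]
      intro i _
      rw [Finset.sum_eq_zero]; intro j _
      rw [Finset.sum_eq_zero]; intro k _
      rw [Finset.sum_eq_zero]; intro l _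
      exact if_neg (fun h => hq α0 (i, j, l) h.2.symm)
  · push_neg at hp
    rw [Gm_offrange_left _ hp]
    rw [Finset.sum_eq_zero, mul_zero]
    intro i _
    rw [Finset.sum_eq_zero]; intro j _
    rw [Finset.sum_eq_zero]; intro k _
    rw [Finset.sum_eq_zero]; intro l _
    exact if_neg (fun h => hp α0 (i, j, k) h.1.symm)

lemma Gm_sum_smul (Λ : I → ℂ)
    (f : I → ∀ α : I, Fin (n α) → Fin (n α) → Fin (nbar α) → Fin (nbar α) → ℂ) :
    (∑ α : I, Λ α • Gm n nbar d (f α))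
      = Gm n nbar d (fun β i i' j j' => ∑ α : I, Λ α * f α β i i' j j') := by
  ext p q
  rw [Matrix.sum_apply]
  simp only [Matrix.smul_apply, smul_eq_mul]
  unfold Gm
  simp only [Finset.mul_sum, mul_ite, mul_zero]
  rw [Finset.sum_comm]
  apply Finset.sum_congr rfl; intro β _
  rw [Finset.sum_comm]
  apply Finset.sum_congr rfl; intro x _
  rw [Finset.sum_comm]
  apply Finset.sum_congr rfl; intro y _
  simp only [Finset.sum_ite_irrel, Finset.sum_const_zero]

lemma Gm_inj (hd : ∀ α, 1 ≤ d α)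
    {c c' : ∀ α : I, Fin (n α) → Fin (n α) → Fin (nbar α) → Fin (nbar α) → ℂ}
    (h : Gm n nbar d c = Gm n nbar d c') : c = c' := by
  funext α i i' j j'
  have h1 := congrFun (congrFun h (eE n nbar d α (i, j, ⟨0, hd α⟩))) (eE n nbar d α (i', j', ⟨0, hd α⟩))
  rwa [Gm_apply_e_same, Gm_apply_e_same] at h1

end PtildeGm
section Sandwich
variable {I : Type} [Fintype I] [DecidableEq I] {n nbar d : I → ℕ}

/-- The coefficient function of the gauge projector. -/
noncomputable def cPi (n nbar d : I → ℕ) :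
    ∀ α : I, Fin (n α) → Fin (n α) → Fin (nbar α) → Fin (nbar α) → ℂ :=
  fun α i i' j j' => if i = i' then if j = j' then (d α : ℂ)⁻¹ else 0 else 0

lemma kron_one_entry (O : Matrix (BIdx I n d) (BIdx I n d) ℂ) (α : I)
    (y' x' : Fin (n α) × Fin (nbar α) × Fin (d α)) :
    (O ⊗ₖ (1 : Matrix (BIdx I nbar d) (BIdx I nbar d) ℂ)) (eE n nbar d α y') (eE n nbar d α x')
      = O ⟨α, (y'.1, y'.2.2)⟩ ⟨α, (x'.1, x'.2.2)⟩
          * (if y'.2.1 = x'.2.1 ∧ y'.2.2 = x'.2.2 then 1 else 0) := by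
  rw [Matrix.kroneckerMap_apply]
  congr 1
  rw [Matrix.one_apply]
  simp [eE, Sigma.ext_iff, Prod.ext_iff]

lemma one_kron_entry (O : Matrix (BIdx I nbar d) (BIdx I nbar d) ℂ) (α : I)
    (y' x' : Fin (n α) × Fin (nbar α) × Fin (d α)) :
    ((1 : Matrix (BIdx I n d) (BIdx I n d) ℂ) ⊗ₖ O) (eE n nbar d α y') (eE n nbar d α x')
      = (if y'.1 = x'.1 ∧ y'.2.2 = x'.2.2 then 1 else 0)
          * O ⟨α, (y'.2.1, y'.2.2)⟩ ⟨α, (x'.2.1, x'.2.2)⟩ := by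
  rw [Matrix.kroneckerMap_apply]
  congr 1
  rw [Matrix.one_apply]
  simp [eE, Sigma.ext_iff, Prod.ext_iff]

lemma kron_one_entry_ne (O : Matrix (BIdx I n d) (BIdx I n d) ℂ) {α β : I} (hab : α ≠ β)
    (y' : Fin (n α) × Fin (nbar α) × Fin (d α)) (x' : Fin (n β) × Fin (nbar β) × Fin (d β)) :
    (O ⊗ₖ (1 : Matrix (BIdx I nbar d) (BIdx I nbar d) ℂ)) (eE n nbar d α y') (eE n nbar d β x')
      = 0 := by
  rw [Matrix.kroneckerMap_apply]
  have h1 : (1 : Matrix (BIdx I nbar d) (BIdx I nbar d) ℂ)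
      (eE n nbar d α y').2 (eE n nbar d β x').2 = 0 :=
    Matrix.one_apply_ne (fun h => hab (congrArg Sigma.fst h))
  rw [h1, mul_zero]

lemma one_kron_entry_ne (O : Matrix (BIdx I nbar d) (BIdx I nbar d) ℂ) {α β : I} (hab : α ≠ β)
    (y' : Fin (n α) × Fin (nbar α) × Fin (d α)) (x' : Fin (n β) × Fin (nbar β) × Fin (d β)) :
    ((1 : Matrix (BIdx I n d) (BIdx I n d) ℂ) ⊗ₖ O) (eE n nbar d α y') (eE n nbar d β x')
      = 0 := by
  rw [Matrix.kroneckerMap_apply]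
  have h1 : (1 : Matrix (BIdx I n d) (BIdx I n d) ℂ)
      (eE n nbar d α y').1 (eE n nbar d β x').1 = 0 :=
    Matrix.one_apply_ne (fun h => hab (congrArg Sigma.fst h))
  rw [h1, zero_mul]

lemma triple_offrange_left {M : Matrix (BIdx I n d × BIdx I nbar d) (BIdx I n d × BIdx I nbar d) ℂ}
    (c c' : ∀ α : I, Fin (n α) → Fin (n α) → Fin (nbar α) → Fin (nbar α) → ℂ)
    {p : BIdx I n d × BIdx I nbar d} (hp : ∀ γ z, p ≠ eE n nbar d γ z) (q) :
    (Gm n nbar d c * M * Gm n nbar d c') p q = 0 := by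
  rw [Matrix.mul_apply]
  apply Finset.sum_eq_zero; intro s _
  rw [Matrix.mul_apply]
  rw [Finset.sum_eq_zero, zero_mul]
  intro r _
  rw [Gm_offrange_left _ hp, zero_mul]

lemma triple_offrange_right {M : Matrix (BIdx I n d × BIdx I nbar d) (BIdx I n d × BIdx I nbar d) ℂ}
    (c c' : ∀ α : I, Fin (n α) → Fin (n α) → Fin (nbar α) → Fin (nbar α) → ℂ)
    {q : BIdx I n d × BIdx I nbar d} (hq : ∀ γ z, q ≠ eE n nbar d γ z) (p) :
    (Gm n nbar d c * M * Gm n nbar d c') p q = 0 := by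
  rw [Matrix.mul_apply]
  apply Finset.sum_eq_zero; intro s _
  rw [Gm_offrange_right _ hq, mul_zero]

lemma sandwichA (O : Matrix (BIdx I n d) (BIdx I n d) ℂ) :
    Gm n nbar d (cPi n nbar d) * (O ⊗ₖ (1 : Matrix (BIdx I nbar d) (BIdx I nbar d) ℂ))
        * Gm n nbar d (cPi n nbar d)
      = Gm n nbar d (fun α i i' j j' => if j = j' then
          (d α : ℂ)⁻¹ * (d α : ℂ)⁻¹ * ∑ m : Fin (d α), O ⟨α, (i, m)⟩ ⟨α, (i', m)⟩ else 0) := by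
  ext p q
  rcases Classical.em (∃ γ z, p = eE n nbar d γ z) with ⟨α, x, rfl⟩ | hp
  · rcases Classical.em (∃ γ z, q = eE n nbar d γ z) with ⟨β, y, rfl⟩ | hq
    · rw [Matrix.mul_assoc, Gm_mul_apply]
      rcases eq_or_ne α β with rfl | hab
      · rw [Gm_apply_e_same]
        have hin : ∀ y' : Fin (n α) × Fin (nbar α) × Fin (d α),
            ((O ⊗ₖ (1 : Matrix (BIdx I nbar d) (BIdx I nbar d) ℂ)) * Gm n nbar d (cPi n nbar d))
              (eE n nbar d α y') (eE n nbar d α y)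
            = ∑ x' : Fin (n α) × Fin (nbar α) × Fin (d α),
                (O ⟨α, (y'.1, y'.2.2)⟩ ⟨α, (x'.1, x'.2.2)⟩
                    * (if y'.2.1 = x'.2.1 ∧ y'.2.2 = x'.2.2 then 1 else 0))
                  * cPi n nbar d α x'.1 y.1 x'.2.1 y.2.1 := by
          intro y'
          rw [mul_Gm_apply]
          apply Finset.sum_congr rfl; intro x' _
          rw [kron_one_entry]
        simp only [hin]
        obtain ⟨x1, x2, x3⟩ := x
        obtain ⟨y1, y2, y3⟩ := y
        unfold cPi
        simp only [Fintype.sum_prod_type]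
        simp only [mul_ite, ite_mul, mul_zero, zero_mul, mul_one, one_mul, ite_and,
          Finset.sum_ite_irrel, Finset.sum_const_zero, Finset.sum_ite_eq, Finset.sum_ite_eq',
          Finset.mem_univ, if_true]
        split_ifs with h
        · rw [Finset.mul_sum]
          apply Finset.sum_congr rfl; intro m _
          ring
        · rfl
      · rw [Gm_apply_e_ne _ hab]
        apply Finset.sum_eq_zero; intro y' _
        rw [mul_Gm_apply]
        rw [Finset.sum_eq_zero, mul_zero]
        intro x' _
        rw [kron_one_entry_ne O hab, zero_mul]
    · push_neg at hq
      rw [triple_offrange_right _ _ hq, Gm_offrange_right _ hq]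
  · push_neg at hp
    rw [triple_offrange_left _ _ hp, Gm_offrange_left _ hp]

lemma sandwichB (O : Matrix (BIdx I nbar d) (BIdx I nbar d) ℂ) :
    Gm n nbar d (cPi n nbar d) * ((1 : Matrix (BIdx I n d) (BIdx I n d) ℂ) ⊗ₖ O)
        * Gm n nbar d (cPi n nbar d)
      = Gm n nbar d (fun α i i' j j' => if i = i' then
          (d α : ℂ)⁻¹ * (d α : ℂ)⁻¹ * ∑ m : Fin (d α), O ⟨α, (j, m)⟩ ⟨α, (j', m)⟩ else 0) := by
  ext p q
  rcases Classical.em (∃ γ z, p = eE n nbar d γ z) with ⟨α, x, rfl⟩ | hp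
  · rcases Classical.em (∃ γ z, q = eE n nbar d γ z) with ⟨β, y, rfl⟩ | hq
    · rw [Matrix.mul_assoc, Gm_mul_apply]
      rcases eq_or_ne α β with rfl | hab
      · rw [Gm_apply_e_same]
        have hin : ∀ y' : Fin (n α) × Fin (nbar α) × Fin (d α),
            (((1 : Matrix (BIdx I n d) (BIdx I n d) ℂ) ⊗ₖ O) * Gm n nbar d (cPi n nbar d))
              (eE n nbar d α y') (eE n nbar d α y)
            = ∑ x' : Fin (n α) × Fin (nbar α) × Fin (d α),
                ((if y'.1 = x'.1 ∧ y'.2.2 = x'.2.2 then 1 else 0)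
                    * O ⟨α, (y'.2.1, y'.2.2)⟩ ⟨α, (x'.2.1, x'.2.2)⟩)
                  * cPi n nbar d α x'.1 y.1 x'.2.1 y.2.1 := by
          intro y'
          rw [mul_Gm_apply]
          apply Finset.sum_congr rfl; intro x' _
          rw [one_kron_entry]
        simp only [hin]
        obtain ⟨x1, x2, x3⟩ := x
        obtain ⟨y1, y2, y3⟩ := y
        unfold cPi
        simp only [Fintype.sum_prod_type]
        simp only [mul_ite, ite_mul, mul_zero, zero_mul, mul_one, one_mul, ite_and,
          Finset.sum_ite_irrel, Finset.sum_const_zero, Finset.sum_ite_eq, Finset.sum_ite_eq',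
          Finset.mem_univ, if_true]
        split_ifs with h
        · rw [Finset.mul_sum]
          apply Finset.sum_congr rfl; intro m _
          ring
        · rfl
      · rw [Gm_apply_e_ne _ hab]
        apply Finset.sum_eq_zero; intro y' _
        rw [mul_Gm_apply]
        rw [Finset.sum_eq_zero, mul_zero]
        intro x' _
        rw [one_kron_entry_ne O hab, zero_mul]
    · push_neg at hq
      rw [triple_offrange_right _ _ hq, Gm_offrange_right _ hq]
  · push_neg at hp
    rw [triple_offrange_left _ _ hp, Gm_offrange_left _ hp]

end Sandwich
section Final
variable {I : Type} [Fintype I] [DecidableEq I] {n nbar d : I → ℕ}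

lemma center_coeff (hd : ∀ α, 1 ≤ d α)
    {KA : ∀ α : I, Fin (n α) → Fin (n α) → ℂ} {KB : ∀ α : I, Fin (nbar α) → Fin (nbar α) → ℂ}
    (hcc : (fun (α : I) (i i' : Fin (n α)) (j j' : Fin (nbar α)) =>
        if j = j' then KA α i i' else 0)
      = (fun (α : I) (i i' : Fin (n α)) (j j' : Fin (nbar α)) =>
        if i = i' then KB α j j' else 0)) :
    ∃ Λ : I → ℂ, (fun (α : I) (i i' : Fin (n α)) (j j' : Fin (nbar α)) =>
        if j = j' then KA α i i' else 0)
      = fun (β : I) (i i' : Fin (n β)) (j j' : Fin (nbar β)) =>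
          ∑ α : I, Λ α * (if β = α then
            (if i = i' then (if j = j' then (d β : ℂ)⁻¹ else 0) else 0) else 0) := by
  have e : ∀ (α : I) (i i' : Fin (n α)) (j j' : Fin (nbar α)),
      (if j = j' then KA α i i' else 0) = (if i = i' then KB α j j' else 0) :=
    fun α i i' j j' =>
      congrFun (congrFun (congrFun (congrFun (congrFun hcc α) i) i') j) j'
  refine ⟨fun α => if h1 : 0 < n α then
    (if h2 : 0 < nbar α then (d α : ℂ) * KA α ⟨0, h1⟩ ⟨0, h1⟩ else 0) else 0, ?_⟩
  funext β i i' j j'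
  have h1 : 0 < n β := i.pos
  have h2 : 0 < nbar β := j.pos
  have hdb : (d β : ℂ) ≠ 0 := Nat.cast_ne_zero.mpr (by have := hd β; omega)
  rw [show (∑ α : I, (if h1 : 0 < n α then
        (if h2 : 0 < nbar α then (d α : ℂ) * KA α ⟨0, h1⟩ ⟨0, h1⟩ else 0) else 0)
      * (if β = α then (if i = i' then (if j = j' then (d β : ℂ)⁻¹ else 0) else 0) else 0))
    = (if h1 : 0 < n β then
        (if h2 : 0 < nbar β then (d β : ℂ) * KA β ⟨0, h1⟩ ⟨0, h1⟩ else 0) else 0)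
      * (if i = i' then (if j = j' then (d β : ℂ)⁻¹ else 0) else 0) from by
    simp only [mul_ite, mul_zero, Finset.sum_ite_eq, Finset.mem_univ, if_true]]
  rw [dif_pos h1, dif_pos h2]
  by_cases hii : i = i'
  · subst hii
    by_cases hjj : j = j'
    · subst hjj
      have hdiag : ∀ (a : Fin (n β)) (b : Fin (nbar β)), KA β a a = KB β b b := by
        intro a b
        have := e β a a b b
        simpa using this
      have hconst : KA β i i = KA β ⟨0, h1⟩ ⟨0, h1⟩ :=
        (hdiag i ⟨0, h2⟩).trans (hdiag ⟨0, h1⟩ ⟨0, h2⟩).symm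
      rw [if_pos rfl, if_pos rfl, if_pos rfl, hconst]
      field_simp
    · rw [if_neg hjj, if_pos rfl, if_neg hjj, mul_zero]
  · by_cases hjj : j = j'
    · subst hjj
      have hoff : KA β i i' = 0 := by
        have := e β i i' ⟨0, h2⟩ ⟨0, h2⟩
        simpa [hii] using this
      rw [if_pos rfl, hoff, if_neg hii, mul_zero]
    · rw [if_neg hjj, if_neg hii, mul_zero]

lemma diagO_coeff (hd : ∀ α, 1 ≤ d α) (α0 : I) :
    (fun (β : I) (i i' : Fin (n β)) (j j' : Fin (nbar β)) => if j = j' then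
        (d β : ℂ)⁻¹ * (d β : ℂ)⁻¹ * ∑ m : Fin (d β),
          (fun (r r' : BIdx I n d) => if r = r' ∧ r.1 = α0 then (1 : ℂ) else 0)
            ⟨β, (i, m)⟩ ⟨β, (i', m)⟩ else 0)
      = fun (β : I) (i i' : Fin (n β)) (j j' : Fin (nbar β)) =>
          if β = α0 then (if i = i' then (if j = j' then (d β : ℂ)⁻¹ else 0) else 0) else 0 := by
  funext β i i' j j'
  have hdb : (d β : ℂ) ≠ 0 := Nat.cast_ne_zero.mpr (by have := hd β; omega)
  have hentry : ∀ m : Fin (d β),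
      (if (⟨β, (i, m)⟩ : BIdx I n d) = ⟨β, (i', m)⟩ ∧ (⟨β, (i, m)⟩ : BIdx I n d).1 = α0
        then (1 : ℂ) else 0)
      = if i = i' ∧ β = α0 then 1 else 0 := by
    intro m
    congr 1
    simp [Sigma.ext_iff, Prod.ext_iff]
  simp only [hentry]
  rw [Finset.sum_const, Finset.card_univ, Fintype.card_fin]
  by_cases hii : i = i' <;> by_cases hba : β = α0 <;> by_cases hjj : j = j' <;>
    simp [hii, hba, hjj] <;> field_simp

lemma diagObar_coeff (hd : ∀ α, 1 ≤ d α) (α0 : I) :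
    (fun (β : I) (i i' : Fin (n β)) (j j' : Fin (nbar β)) => if i = i' then
        (d β : ℂ)⁻¹ * (d β : ℂ)⁻¹ * ∑ m : Fin (d β),
          (fun (r r' : BIdx I nbar d) => if r = r' ∧ r.1 = α0 then (1 : ℂ) else 0)
            ⟨β, (j, m)⟩ ⟨β, (j', m)⟩ else 0)
      = fun (β : I) (i i' : Fin (n β)) (j j' : Fin (nbar β)) =>
          if β = α0 then (if i = i' then (if j = j' then (d β : ℂ)⁻¹ else 0) else 0) else 0 := by
  funext β i i' j j'
  have hdb : (d β : ℂ) ≠ 0 := Nat.cast_ne_zero.mpr (by have := hd β; omega)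
  have hentry : ∀ m : Fin (d β),
      (if (⟨β, (j, m)⟩ : BIdx I nbar d) = ⟨β, (j', m)⟩ ∧ (⟨β, (j, m)⟩ : BIdx I nbar d).1 = α0
        then (1 : ℂ) else 0)
      = if j = j' ∧ β = α0 then 1 else 0 := by
    intro m
    congr 1
    simp [Sigma.ext_iff, Prod.ext_iff]
  simp only [hentry]
  rw [Finset.sum_const, Finset.card_univ, Fintype.card_fin]
  by_cases hii : i = i' <;> by_cases hba : β = α0 <;> by_cases hjj : j = j' <;>
    simp [hii, hba, hjj] <;> field_simp

end Final
/-- the center of the gauge-invariant subregion algebra: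
`Ã_r ∩ Ã_r̄ = span_ℂ {P̃^α : α ∈ I}`, where
`P̃^α = d_α⁻¹ Σ_{ijkℓ} |αik⟩⟨αiℓ| ⊗ |ᾱjk⟩⟨ᾱjℓ|` are the superselection-sector
projections. -/
theorem stmt7 (G I : Type) [Group G] [Fintype G] [Fintype I] [DecidableEq I]
    (d : I → ℕ) (hd : ∀ α, 1 ≤ d α)
    (D : ∀ α : I, G →* Matrix.unitaryGroup (Fin (d α)) ℂ)
    (hirr : ∀ α (W : Submodule ℂ (Fin (d α) → ℂ)),
      (∀ g : G, ∀ x ∈ W, (D α g : Matrix (Fin (d α)) (Fin (d α)) ℂ) *ᵥ x ∈ W) →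
      W = ⊥ ∨ W = ⊤)
    (hnoniso : ∀ α β, α ≠ β → ∀ F : Matrix (Fin (d α)) (Fin (d β)) ℂ,
      (∀ g : G, (D α g : Matrix (Fin (d α)) (Fin (d α)) ℂ) * F
          = F * (D β g : Matrix (Fin (d β)) (Fin (d β)) ℂ)) → F = 0)
    (n nbar : I → ℕ) :
    AtildeR n nbar D ∩ AtildeRbar n nbar D
      = (Submodule.span ℂ (Set.range (fun α : I => Ptilde n nbar d α)) :
          Submodule ℂ (Matrix (BIdx I n d × BIdx I nbar d) (BIdx I n d × BIdx I nbar d) ℂ)) := by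
  have hPi : gaugeProj n nbar D = Gm n nbar d (cPi n nbar d) :=
    gaugeProj_eq hd D hirr hnoniso
  ext T
  simp only [Set.mem_inter_iff, SetLike.mem_coe]
  constructor
  · rintro ⟨⟨O, rfl⟩, OB, hOB⟩
    rw [hPi] at hOB ⊢
    rw [sandwichA] at hOB ⊢
    rw [sandwichB] at hOB
    have hcc := Gm_inj hd hOB
    obtain ⟨Λ, hΛ⟩ := center_coeff hd hcc
    rw [hΛ, ← Gm_sum_smul]
    apply Submodule.sum_mem
    intro α _
    apply Submodule.smul_mem
    apply Submodule.subset_span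
    exact ⟨α, Ptilde_eq_Gm α⟩
  · intro hT
    induction hT using Submodule.span_induction with
    | mem x hx =>
        obtain ⟨α, rfl⟩ := hx
        refine ⟨⟨fun r r' => if r = r' ∧ r.1 = α then (1 : ℂ) else 0, ?_⟩,
          ⟨fun r r' => if r = r' ∧ r.1 = α then (1 : ℂ) else 0, ?_⟩⟩
        · rw [hPi, sandwichA (fun r r' => if r = r' ∧ r.1 = α then (1 : ℂ) else 0), diagO_coeff hd α, ← Ptilde_eq_Gm]
        · rw [hPi, sandwichB (fun r r' => if r = r' ∧ r.1 = α then (1 : ℂ) else 0), diagObar_coeff hd α, ← Ptilde_eq_Gm]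
    | zero =>
        refine ⟨⟨0, ?_⟩, ⟨0, ?_⟩⟩
        · rw [Matrix.zero_kronecker, Matrix.mul_zero, Matrix.zero_mul]
        · rw [Matrix.kronecker_zero, Matrix.mul_zero, Matrix.zero_mul]
    | add x y hx hy ihx ihy =>
        obtain ⟨⟨Ox, hOx⟩, ⟨Ox', hOx'⟩⟩ := ihx
        obtain ⟨⟨Oy, hOy⟩, ⟨Oy', hOy'⟩⟩ := ihy
        refine ⟨⟨Ox + Oy, ?_⟩, ⟨Ox' + Oy', ?_⟩⟩
        · rw [hOx, hOy, Matrix.add_kronecker, Matrix.mul_add, Matrix.add_mul]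
        · rw [hOx', hOy', Matrix.kronecker_add, Matrix.mul_add, Matrix.add_mul]
    | smul a x hx ihx =>
        obtain ⟨⟨Ox, hOx⟩, ⟨Ox', hOx'⟩⟩ := ihx
        refine ⟨⟨a • Ox, ?_⟩, ⟨a • Ox', ?_⟩⟩
        · rw [hOx, Matrix.smul_kronecker, Matrix.mul_smul, Matrix.smul_mul]
        · rw [hOx', Matrix.kronecker_smul, Matrix.mul_smul, Matrix.smul_mul]
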